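/- Let 𝒜 be an abelian category, 𝒞 a full additive subcategory, C• a bounded-above complex with all terms in 𝒞, and f : X• → C• a 𝒞-quasi-isomorphism of complexes. Then there exists a cochain map g : C• → X• such that f∘g is homotopic to the identity of C•. -/

import Mathlib

open CategoryTheory Limits

universe v u

variable {A : Type u} [Category.{v} A] [Abelian A]

/-- A complex `X` is `𝒞`-acyclic if `Hom_𝒜(C, X)` is an acyclic complex of abelian
groups for every `C ∈ 𝒞`. -/
def CAcyclic (𝒞 : Set A) (X : CochainComplex A ℤ) : Prop :=
  ∀ C ∈ 𝒞, ∀ i : ℤ,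
    (((preadditiveCoyoneda.obj (Opposite.op C)).mapHomologicalComplex
      (ComplexShape.up ℤ)).obj X).ExactAt i

/-- A chain map `f` is a `𝒞`-quasi-isomorphism if `Hom_𝒜(C, f)` is a quasi-isomorphism
for every `C ∈ 𝒞`. -/
def CQuasiIso (𝒞 : Set A) {X Y : CochainComplex A ℤ} (f : X ⟶ Y) : Prop :=
  ∀ C ∈ 𝒞, QuasiIso (((preadditiveCoyoneda.obj (Opposite.op C)).mapHomologicalComplex
      (ComplexShape.up ℤ)).map f)

/-- A cochain complex is bounded above. -/
def BoundedAbove (X : CochainComplex A ℤ) : Prop :=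
  ∃ n : ℤ, ∀ i : ℤ, n < i → IsZero (X.X i)

namespace Stmt1Aux

lemma XIsoOfEq_hom_comp_d (Z : CochainComplex A ℤ) {p q : ℤ} (h : p = q) (r : ℤ) :
    (Z.XIsoOfEq h).hom ≫ Z.d q r = Z.d p r := by
  subst h; simp [HomologicalComplex.XIsoOfEq]

lemma step_lift {C : A} {Z : CochainComplex A ℤ}
    (hZ : ∀ i : ℤ, (((preadditiveCoyoneda.obj (Opposite.op C)).mapHomologicalComplex
      (ComplexShape.up ℤ)).obj Z).ExactAt i)
    (n : ℤ) (ψ : C ⟶ Z.X n) (hψ : ψ ≫ Z.d n (n + 1) = 0) :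
    ∃ h : C ⟶ Z.X (n - 1), h ≫ Z.d (n - 1) n = ψ := by
  have h1 : (ComplexShape.up ℤ).prev n = n - 1 := CochainComplex.prev ℤ n
  have h2 : (ComplexShape.up ℤ).next n = n + 1 := CochainComplex.next ℤ n
  have e := (HomologicalComplex.exactAt_iff'
    (((preadditiveCoyoneda.obj (Opposite.op C)).mapHomologicalComplex
      (ComplexShape.up ℤ)).obj Z) (n - 1) n (n + 1) h1 h2).1 (hZ n)
  rw [ShortComplex.ab_exact_iff] at e
  exact e ψ hψ

section

variable {Z Cc : CochainComplex A ℤ} (𝒞 : Set A) (φ : Cc ⟶ Z)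

/-- The homotopy condition in degree `n`. -/
def Comm (h : ∀ i : ℤ, Cc.X i ⟶ Z.X (i - 1)) (n : ℤ) : Prop :=
  φ.f n = Cc.d n (n + 1) ≫ h (n + 1) ≫ (Z.XIsoOfEq (show n + 1 - 1 = n by omega)).hom
      + h n ≫ Z.d (n - 1) n

variable (hZ : CAcyclic 𝒞 Z) (hC : ∀ i, Cc.X i ∈ 𝒞)

open scoped Classical in
/-- One step of the inductive construction. -/
noncomputable def stepFun (h : ∀ i : ℤ, Cc.X i ⟶ Z.X (i - 1)) (n : ℤ) :
    Cc.X n ⟶ Z.X (n - 1) :=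
  if hc : (φ.f n - Cc.d n (n + 1) ≫ h (n + 1) ≫
      (Z.XIsoOfEq (show n + 1 - 1 = n by omega)).hom) ≫ Z.d n (n + 1) = 0 then
    (step_lift (hZ (Cc.X n) (hC n)) n _ hc).choose
  else 0

lemma stepFun_spec (h : ∀ i : ℤ, Cc.X i ⟶ Z.X (i - 1)) (n : ℤ)
    (hc : (φ.f n - Cc.d n (n + 1) ≫ h (n + 1) ≫
      (Z.XIsoOfEq (show n + 1 - 1 = n by omega)).hom) ≫ Z.d n (n + 1) = 0) :
    stepFun 𝒞 φ hZ hC h n ≫ Z.d (n - 1) n =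
      φ.f n - Cc.d n (n + 1) ≫ h (n + 1) ≫
        (Z.XIsoOfEq (show n + 1 - 1 = n by omega)).hom := by
  rw [stepFun, dif_pos hc]
  exact (step_lift (hZ (Cc.X n) (hC n)) n _ hc).choose_spec

variable (N : ℤ)

/-- The sequence of partial homotopies. -/
noncomputable def build : ℕ → ∀ i : ℤ, Cc.X i ⟶ Z.X (i - 1)
  | 0 => fun _ => 0
  | k + 1 => fun i =>
      if i = N - k then stepFun 𝒞 φ hZ hC (build k) i else build k i

lemma build_stab {k k' : ℕ} (hkk : k ≤ k') {i : ℤ} (hi : N - k < i) :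
    build 𝒞 φ hZ hC N k' i = build 𝒞 φ hZ hC N k i := by
  induction k' with
  | zero => obtain rfl : k = 0 := Nat.le_zero.1 hkk; rfl
  | succ k' ih =>
    rcases Nat.lt_or_ge k (k' + 1) with hk | hk
    · have hk' : k ≤ k' := Nat.lt_succ_iff.1 hk
      have : i ≠ N - k' := by
        have : (k : ℤ) ≤ k' := by exact_mod_cast hk'
        omega
      rw [show build 𝒞 φ hZ hC N (k' + 1) i = if i = N - k' then
          stepFun 𝒞 φ hZ hC (build 𝒞 φ hZ hC N k') i else build 𝒞 φ hZ hC N k' i from rfl,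
        if_neg this]
      exact ih hk'
    · obtain rfl : k = k' + 1 := le_antisymm hkk hk
      rfl

lemma build_comm (hN : ∀ i, N < i → IsZero (Cc.X i)) :
    ∀ k : ℕ, ∀ i : ℤ, N - k < i → Comm φ (build 𝒞 φ hZ hC N k) i := by
  intro k
  induction k with
  | zero =>
    intro i hi
    exact ((hN i (by omega)).eq_of_src _ _)
  | succ k ih =>
    intro i hi
    rcases eq_or_ne i (N - k) with rfl | hne
    · -- the new degree
      have hcomm := ih (N - k + 1) (by omega)
      rw [Comm] at hcomm
      have hc : (φ.f (N - k) - Cc.d (N - k) (N - k + 1) ≫ build 𝒞 φ hZ hC N k (N - k + 1) ≫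
          (Z.XIsoOfEq (show N - k + 1 - 1 = N - k by omega)).hom) ≫
            Z.d (N - k) (N - k + 1) = 0 := by
        rw [Preadditive.sub_comp, Category.assoc, Category.assoc,
          XIsoOfEq_hom_comp_d, φ.comm (N - k) (N - k + 1)]
        rw [hcomm]
        simp [Preadditive.comp_add, Preadditive.add_comp]
      have hsp := stepFun_spec 𝒞 φ hZ hC (build 𝒞 φ hZ hC N k) (N - k) hc
      rw [Comm]
      have e1 : build 𝒞 φ hZ hC N (k + 1) (N - k) =
          stepFun 𝒞 φ hZ hC (build 𝒞 φ hZ hC N k) (N - k) := by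
        rw [show build 𝒞 φ hZ hC N (k + 1) (N - k) = if (N - (k:ℤ)) = N - k then
            stepFun 𝒞 φ hZ hC (build 𝒞 φ hZ hC N k) (N - k) else
            build 𝒞 φ hZ hC N k (N - k) from rfl, if_pos rfl]
      have e2 : build 𝒞 φ hZ hC N (k + 1) (N - k + 1) =
          build 𝒞 φ hZ hC N k (N - k + 1) := by
        rw [show build 𝒞 φ hZ hC N (k + 1) (N - (k:ℤ) + 1) = if (N - (k:ℤ) + 1) = N - k then
            stepFun 𝒞 φ hZ hC (build 𝒞 φ hZ hC N k) (N - (k:ℤ) + 1) else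
            build 𝒞 φ hZ hC N k (N - (k:ℤ) + 1) from rfl, if_neg (by omega)]
      rw [e1, e2, hsp]
      abel
    · -- earlier degrees: build (k+1) agrees with build k
      have hi' : N - k < i := by omega
      have e1 : build 𝒞 φ hZ hC N (k + 1) i = build 𝒞 φ hZ hC N k i := by
        rw [show build 𝒞 φ hZ hC N (k + 1) i = if i = N - k then
            stepFun 𝒞 φ hZ hC (build 𝒞 φ hZ hC N k) i else
            build 𝒞 φ hZ hC N k i from rfl, if_neg hne]
      have e2 : build 𝒞 φ hZ hC N (k + 1) (i + 1) = build 𝒞 φ hZ hC N k (i + 1) := by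
        rw [show build 𝒞 φ hZ hC N (k + 1) (i + 1) = if (i + 1) = N - k then
            stepFun 𝒞 φ hZ hC (build 𝒞 φ hZ hC N k) (i + 1) else
            build 𝒞 φ hZ hC N k (i + 1) from rfl, if_neg (by omega)]
      have := ih i hi'
      rw [Comm] at this ⊢
      rw [e1, e2]
      exact this

end

/-- Any chain map from a bounded-above complex over `𝒞` to a `𝒞`-acyclic complex is
null-homotopic. -/
lemma nullhomotopic (𝒞 : Set A) {Z Cc : CochainComplex A ℤ} (hZ : CAcyclic 𝒞 Z)
    (hC : ∀ i, Cc.X i ∈ 𝒞) (hbdd : BoundedAbove Cc) (φ : Cc ⟶ Z) :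
    Nonempty (Homotopy φ 0) := by
  obtain ⟨N, hN⟩ := hbdd
  set H : ∀ i : ℤ, Cc.X i ⟶ Z.X (i - 1) :=
    fun i => build 𝒞 φ hZ hC N (N + 1 - i).toNat i with hH
  have hcomm : ∀ i : ℤ, Comm φ H i := by
    intro i
    by_cases hi : N < i
    · exact ((hN i hi).eq_of_src _ _)
    · push_neg at hi
      have c1 : Comm φ (build 𝒞 φ hZ hC N (N + 1 - i).toNat) i :=
        build_comm 𝒞 φ hZ hC N hN _ i (by omega)
      have c2 : build 𝒞 φ hZ hC N (N + 1 - i).toNat (i + 1) =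
          build 𝒞 φ hZ hC N (N - i).toNat (i + 1) :=
        build_stab 𝒞 φ hZ hC N (by omega) (by omega)
      have hHi : H i = build 𝒞 φ hZ hC N (N + 1 - i).toNat i := rfl
      have hHi1 : H (i + 1) = build 𝒞 φ hZ hC N (N + 1 - (i + 1)).toNat (i + 1) := rfl
      have : (N + 1 - (i + 1)).toNat = (N - i).toNat := by omega
      rw [Comm] at c1 ⊢
      rw [hHi, hHi1, this, ← c2]
      exact c1
  refine ⟨{
    hom := fun i j => if e : i - 1 = j then H i ≫ (Z.XIsoOfEq e).hom else 0
    zero := fun i j hij =>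
      dif_neg (fun hij' => hij (show j + 1 = i by omega))
    comm := fun i => ?_ }⟩
  rw [dNext_eq _ (show (ComplexShape.up ℤ).Rel i (i + 1) from rfl),
    prevD_eq _ (show (ComplexShape.up ℤ).Rel (i - 1) i by simp)]
  rw [dif_pos (show i + 1 - 1 = i by omega), dif_pos rfl]
  have := hcomm i
  rw [Comm] at this
  simpa using this

end Stmt1Aux

open Stmt1Aux in
/-- The mapping cone of a `𝒞`-quasi-isomorphism is `𝒞`-acyclic. -/
lemma coneAcyclic (𝒞 : Set A) {X Y : CochainComplex A ℤ} (f : X ⟶ Y)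
    (hf : CQuasiIso 𝒞 f) : CAcyclic 𝒞 (CochainComplex.mappingCone f) := by
  intro C hC' n
  set F := preadditiveCoyoneda.obj (Opposite.op C) with hF
  have q : QuasiIso ((F.mapHomologicalComplex (ComplexShape.up ℤ)).map f) := hf C hC'
  set f' := (F.mapHomologicalComplex (ComplexShape.up ℤ)).map f with hf'
  have w : (HomotopyCategory.quasiIso AddCommGrpCat (ComplexShape.up ℤ))
      ((HomotopyCategory.quotient _ _).map f') := by
    rw [HomotopyCategory.quotient_map_mem_quasiIso_iff,
      HomologicalComplex.mem_quasiIso_iff]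
    exact q
  rw [HomotopyCategory.quasiIso_eq_subcategoryAcyclic_W] at w
  have hmem := ((HomotopyCategory.subcategoryAcyclic AddCommGrpCat).trW_iff_of_distinguished
    _ (HomotopyCategory.mappingCone_triangleh_distinguished f')).1 w
  have hmem' : (HomotopyCategory.subcategoryAcyclic AddCommGrpCat)
      ((HomotopyCategory.quotient AddCommGrpCat (ComplexShape.up ℤ)).obj
        (CochainComplex.mappingCone f')) := hmem
  rw [HomotopyCategory.quotient_obj_mem_subcategoryAcyclic_iff_exactAt] at hmem'
  exact (hmem' n).of_iso (CochainComplex.mappingCone.mapHomologicalComplexIso f F).symm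

/-- a `𝒞`-quasi-isomorphism to a bounded-above complex over `𝒞` admits a
section up to homotopy. -/
theorem stmt1 (𝒞 : Set A) (X Cc : CochainComplex A ℤ)
    (hC : ∀ i, Cc.X i ∈ 𝒞) (hbdd : BoundedAbove Cc)
    (f : X ⟶ Cc) (hf : CQuasiIso 𝒞 f) :
    ∃ g : Cc ⟶ X, Nonempty (Homotopy (g ≫ f) (𝟙 Cc)) := by
  obtain ⟨h0⟩ := Stmt1Aux.nullhomotopic 𝒞 (coneAcyclic 𝒞 f hf) hC hbdd
    (CochainComplex.mappingCone.inr f)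
  have hz : (HomotopyCategory.quotient A (ComplexShape.up ℤ)).map
      (CochainComplex.mappingCone.inr f) = 0 := by
    rw [HomotopyCategory.eq_of_homotopy _ _ h0, Functor.map_zero]
  obtain ⟨y, hy⟩ := Pretriangulated.Triangle.coyoneda_exact₂ _
    (HomotopyCategory.mappingCone_triangleh_distinguished f) (𝟙 _)
    (by dsimp [CochainComplex.mappingCone.triangleh]; rw [Category.id_comp]; exact hz)
  obtain ⟨g, hg⟩ := (HomotopyCategory.quotient A (ComplexShape.up ℤ)).map_surjective y
  refine ⟨g, ⟨HomotopyCategory.homotopyOfEq _ _ ?_⟩⟩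
  have hg' : (HomotopyCategory.quotient A (ComplexShape.up ℤ)).map (g : Cc ⟶ X) = y := hg
  refine (Functor.map_comp _ (g : Cc ⟶ X) f).trans ?_
  rw [hg', CategoryTheory.Functor.map_id]
  exact hy.symm
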